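/- For an ergodic stationary finite-alphabet stochastic process S = (S_n), the permutation entropy rate exists and equals the Shannon entropy rate: lim_{L→∞} (1/(L−1)) H(R_1, ..., R_L) = lim_{L→∞} (1/L) H(S_1, ..., S_L), where R_n are the rank variables of the process. -/

import Mathlib

open MeasureTheory ProbabilityTheory Filter Real

/-- Shannon entropy (base 2) of a random variable. -/
noncomputable def shEntropy {Ω : Type*} [MeasurableSpace Ω] {A : Type*}
    (μ : Measure Ω) (X : Ω → A) : ℝ :=
  -∑' a : A, (μ (X ⁻¹' {a})).toReal * Real.logb 2 (μ (X ⁻¹' {a})).toReal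

namespace PermEnt

variable {Ω : Type*} [MeasurableSpace Ω] {μ : Measure Ω} [IsProbabilityMeasure μ]

/-- probability of `X = b`. -/
noncomputable def pr {B : Type*} (μ : Measure Ω) (X : Ω → B) (b : B) : ℝ :=
  (μ (X ⁻¹' {b})).toReal

lemma pr_nonneg {B : Type*} (X : Ω → B) (b : B) : 0 ≤ pr μ X b := ENNReal.toReal_nonneg

lemma pr_le_one {B : Type*} (X : Ω → B) (b : B) : pr μ X b ≤ 1 := by
  have h := prob_le_one (μ := μ) (s := X ⁻¹' {b})
  simpa [pr] using ENNReal.toReal_le_of_le_ofReal zero_le_one (by simpa using h)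

lemma measure_preimage_finset {B : Type*} (X : Ω → B)
    (hX : ∀ b, MeasurableSet (X ⁻¹' {b})) (J : Finset B) :
    μ (X ⁻¹' ↑J) = ∑ b ∈ J, μ (X ⁻¹' {b}) := by
  have hU : X ⁻¹' ↑J = ⋃ b ∈ J, X ⁻¹' {b} := by
    ext ω; simp
  rw [hU, measure_biUnion_finset ?_ (fun b _ => hX b)]
  intro i _ j _ hij
  refine Set.disjoint_left.mpr ?_
  intro ω h1 h2
  exact hij (by simpa using h1 ▸ (by simpa using h2 : X ω = j) ▸ rfl)

lemma pr_preimage_finset {B : Type*} (X : Ω → B)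
    (hX : ∀ b, MeasurableSet (X ⁻¹' {b})) (J : Finset B) :
    (μ (X ⁻¹' ↑J)).toReal = ∑ b ∈ J, pr μ X b := by
  rw [measure_preimage_finset X hX J, ENNReal.toReal_sum]
  · rfl
  · exact fun b _ => measure_ne_top μ _

lemma sum_pr_eq_one {B : Type*} (X : Ω → B) (F : Finset B)
    (hF : ∀ ω, X ω ∈ F) (hX : ∀ b, MeasurableSet (X ⁻¹' {b})) :
    ∑ b ∈ F, pr μ X b = 1 := by
  rw [← pr_preimage_finset X hX F]
  have : X ⁻¹' ↑F = Set.univ := by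
    ext ω; simp [hF ω]
  rw [this]
  simp

lemma shEntropy_eq_sum {B : Type*} (X : Ω → B) (F : Finset B)
    (hF : ∀ ω, X ω ∈ F) :
    shEntropy μ X = -∑ b ∈ F, pr μ X b * Real.logb 2 (pr μ X b) := by
  unfold shEntropy
  congr 1
  refine tsum_eq_sum ?_
  intro b hb
  have : X ⁻¹' {b} = ∅ := by
    ext ω
    simp only [Set.mem_preimage, Set.mem_singleton_iff, Set.mem_empty_iff_false, iff_false]
    intro h; exact hb (h ▸ hF ω)
  simp [this]

lemma shEntropy_nonneg {B : Type*} (X : Ω → B) (F : Finset B)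
    (hF : ∀ ω, X ω ∈ F) : 0 ≤ shEntropy μ X := by
  rw [shEntropy_eq_sum X F hF, neg_nonneg]
  refine Finset.sum_nonpos fun b _ => ?_
  exact mul_nonpos_of_nonneg_of_nonpos (pr_nonneg X b)
    (Real.logb_nonpos one_lt_two (pr_nonneg X b) (pr_le_one X b))

/-- Gibbs inequality. -/
lemma gibbs {I : Type*} (J : Finset I) (p r : I → ℝ)
    (hp : ∀ i ∈ J, 0 ≤ p i) (hr : ∀ i ∈ J, 0 ≤ r i)
    (hpr : ∀ i ∈ J, p i ≠ 0 → 0 < r i)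
    (hp1 : ∑ i ∈ J, p i = 1) (hr1 : ∑ i ∈ J, r i ≤ 1) :
    -∑ i ∈ J, p i * Real.logb 2 (p i) ≤ -∑ i ∈ J, p i * Real.logb 2 (r i) := by
  have key : ∑ i ∈ J, p i * (Real.log (r i) - Real.log (p i)) ≤ 0 := by
    have hterm : ∀ i ∈ J, p i * (Real.log (r i) - Real.log (p i)) ≤ r i - p i := by
      intro i hi
      rcases eq_or_lt_of_le (hp i hi) with h0 | h0
      · simp [← h0]; exact hr i hi
      · have hri : 0 < r i := hpr i hi h0.ne'
        have : Real.log (r i) - Real.log (p i) = Real.log (r i / p i) := by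
          rw [Real.log_div (ne_of_gt hri) (ne_of_gt h0)]
        rw [this]
        have hlog := Real.log_le_sub_one_of_pos (div_pos hri h0)
        calc p i * Real.log (r i / p i) ≤ p i * (r i / p i - 1) := by
              exact mul_le_mul_of_nonneg_left hlog (le_of_lt h0)
          _ = r i - p i := by field_simp
    calc ∑ i ∈ J, p i * (Real.log (r i) - Real.log (p i))
        ≤ ∑ i ∈ J, (r i - p i) := Finset.sum_le_sum hterm
      _ = (∑ i ∈ J, r i) - (∑ i ∈ J, p i) := Finset.sum_sub_distrib _ _
      _ ≤ 0 := by rw [hp1]; linarith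
  have hlog2 : (0:ℝ) < Real.log 2 := Real.log_pos one_lt_two
  have : ∑ i ∈ J, p i * (Real.logb 2 (r i) - Real.logb 2 (p i))
      = (∑ i ∈ J, p i * (Real.log (r i) - Real.log (p i))) / Real.log 2 := by
    rw [Finset.sum_div]
    refine Finset.sum_congr rfl fun i _ => ?_
    simp [Real.logb, mul_div_assoc, sub_div]
  have h2 : ∑ i ∈ J, p i * (Real.logb 2 (r i) - Real.logb 2 (p i)) ≤ 0 := by
    rw [this]
    exact div_nonpos_of_nonpos_of_nonneg key (le_of_lt hlog2)
  have h3 : ∑ i ∈ J, p i * (Real.logb 2 (r i) - Real.logb 2 (p i))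
      = (∑ i ∈ J, p i * Real.logb 2 (r i)) - ∑ i ∈ J, p i * Real.logb 2 (p i) := by
    rw [← Finset.sum_sub_distrib]
    refine Finset.sum_congr rfl fun i _ => by ring
  linarith [h3 ▸ h2]


omit [IsProbabilityMeasure μ] in
lemma meas_preimage_finset {B : Type*} (X : Ω → B)
    (hX : ∀ b, MeasurableSet (X ⁻¹' {b})) (J : Finset B) :
    MeasurableSet (X ⁻¹' ↑J) := by
  have hU : X ⁻¹' ↑J = ⋃ b ∈ J, X ⁻¹' {b} := by ext ω; simp
  rw [hU]; exact J.measurableSet_biUnion (fun b _ => hX b)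

omit [IsProbabilityMeasure μ] in
lemma comp_preimage_eq {B C : Type*} [DecidableEq C] (X : Ω → B) (F : Finset B)
    (hF : ∀ ω, X ω ∈ F) (f : B → C) (c : C) :
    (fun ω => f (X ω)) ⁻¹' {c} = X ⁻¹' ↑(F.filter fun b => f b = c) := by
  ext ω; simp [hF ω]

omit [IsProbabilityMeasure μ] in
lemma comp_meas {B C : Type*} [DecidableEq C] (X : Ω → B) (F : Finset B)
    (hF : ∀ ω, X ω ∈ F) (hX : ∀ b, MeasurableSet (X ⁻¹' {b})) (f : B → C) (c : C) :
    MeasurableSet ((fun ω => f (X ω)) ⁻¹' {c}) := by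
  rw [comp_preimage_eq X F hF f c]; exact meas_preimage_finset X hX _

lemma pr_comp {B C : Type*} [DecidableEq C] (X : Ω → B) (F : Finset B)
    (hF : ∀ ω, X ω ∈ F) (hX : ∀ b, MeasurableSet (X ⁻¹' {b})) (f : B → C) (c : C) :
    pr μ (fun ω => f (X ω)) c = ∑ b ∈ F.filter (fun b => f b = c), pr μ X b := by
  show (μ _).toReal = _
  rw [comp_preimage_eq X F hF f c, pr_preimage_finset X hX]

lemma pr_mono_of_subset {B C : Type*} (X : Ω → B) (Y : Ω → C) (b : B) (c : C)
    (h : X ⁻¹' {b} ⊆ Y ⁻¹' {c}) : pr μ X b ≤ pr μ Y c := by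
  unfold pr
  exact ENNReal.toReal_le_toReal (measure_ne_top μ _) (measure_ne_top μ _) |>.mpr
    (measure_mono h)

lemma shEntropy_comp_le {B C : Type*} (X : Ω → B) (F : Finset B)
    (hF : ∀ ω, X ω ∈ F) (hX : ∀ b, MeasurableSet (X ⁻¹' {b})) (f : B → C) :
    shEntropy μ (fun ω => f (X ω)) ≤ shEntropy μ X := by
  classical
  set q := pr μ (fun ω => f (X ω)) with hq
  have hFq : ∀ ω, f (X ω) ∈ F.image f := fun ω => Finset.mem_image_of_mem f (hF ω)
  rw [shEntropy_eq_sum (fun ω => f (X ω)) (F.image f) hFq, shEntropy_eq_sum X F hF,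
    neg_le_neg_iff]
  have hgroup : ∑ c ∈ F.image f, q c * Real.logb 2 (q c)
      = ∑ b ∈ F, pr μ X b * Real.logb 2 (q (f b)) := by
    rw [← Finset.sum_fiberwise_of_maps_to (fun b hb => Finset.mem_image_of_mem f hb)
      (fun b => pr μ X b * Real.logb 2 (q (f b)))]
    refine Finset.sum_congr rfl fun c hc => ?_
    have h1 : ∑ b ∈ F.filter (fun b => f b = c), pr μ X b * Real.logb 2 (q (f b))
        = ∑ b ∈ F.filter (fun b => f b = c), pr μ X b * Real.logb 2 (q c) := by
      refine Finset.sum_congr rfl fun b hb => ?_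
      rw [(Finset.mem_filter.mp hb).2]
    rw [h1, ← Finset.sum_mul, ← pr_comp X F hF hX f c]
  rw [hgroup]
  refine Finset.sum_le_sum fun b hb => ?_
  rcases eq_or_lt_of_le (pr_nonneg (μ := μ) X b) with h0 | h0
  · rw [← h0]; simp
  · have hle : pr μ X b ≤ q (f b) := by
      refine pr_mono_of_subset X _ b (f b) ?_
      intro ω hω
      simp only [Set.mem_preimage, Set.mem_singleton_iff] at hω ⊢
      rw [hω]
    exact mul_le_mul_of_nonneg_left (Real.logb_le_logb_of_le one_lt_two h0 hle)
      (le_of_lt h0)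

lemma shEntropy_comp_injOn {B C : Type*} (X : Ω → B) (F : Finset B)
    (hF : ∀ ω, X ω ∈ F) (hX : ∀ b, MeasurableSet (X ⁻¹' {b})) (f : B → C)
    (hf : Set.InjOn f ↑F) :
    shEntropy μ (fun ω => f (X ω)) = shEntropy μ X := by
  classical
  have hFq : ∀ ω, f (X ω) ∈ F.image f := fun ω => Finset.mem_image_of_mem f (hF ω)
  rw [shEntropy_eq_sum (fun ω => f (X ω)) (F.image f) hFq, shEntropy_eq_sum X F hF]
  congr 1
  rw [Finset.sum_image (fun x hx y hy h => hf hx hy h)]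
  refine Finset.sum_congr rfl fun b hb => ?_
  have : pr μ (fun ω => f (X ω)) (f b) = pr μ X b := by
    rw [pr_comp X F hF hX f (f b)]
    have hfil : F.filter (fun b' => f b' = f b) = {b} := by
      ext b'
      simp only [Finset.mem_filter, Finset.mem_singleton]
      constructor
      · rintro ⟨hb', heq⟩; exact hf hb' hb heq
      · rintro rfl; exact ⟨hb, rfl⟩
    rw [hfil, Finset.sum_singleton]
  rw [this]


section Pair
variable {B C : Type*} (X : Ω → B) (Y : Ω → C) (F : Finset B) (G : Finset C)
  (hF : ∀ ω, X ω ∈ F) (hG : ∀ ω, Y ω ∈ G)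
  (hZ : ∀ bc : B × C, MeasurableSet ((fun ω => (X ω, Y ω)) ⁻¹' {bc}))

omit [IsProbabilityMeasure μ] in
include hG in
lemma fst_preimage : ∀ b : B, X ⁻¹' {b} = (fun ω => (X ω, Y ω)) ⁻¹' ↑({b} ×ˢ G) := by
  intro b; ext ω
  simp only [Set.mem_preimage, Set.mem_singleton_iff, Finset.coe_product,
    Finset.coe_singleton, Set.mem_prod, Finset.mem_coe]
  exact ⟨fun h => ⟨h, hG ω⟩, fun h => h.1⟩

omit [IsProbabilityMeasure μ] in
include hF in
lemma snd_preimage : ∀ c : C, Y ⁻¹' {c} = (fun ω => (X ω, Y ω)) ⁻¹' ↑(F ×ˢ {c}) := by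
  intro c; ext ω
  simp only [Set.mem_preimage, Set.mem_singleton_iff, Finset.coe_product,
    Finset.coe_singleton, Set.mem_prod, Finset.mem_coe]
  exact ⟨fun h => ⟨hF ω, h⟩, fun h => h.2⟩

include hG hZ in
lemma pr_fst : ∀ b : B, pr μ X b = ∑ c ∈ G, pr μ (fun ω => (X ω, Y ω)) (b, c) := by
  intro b
  show (μ _).toReal = _
  rw [fst_preimage X Y G hG b, pr_preimage_finset _ hZ, Finset.sum_product,
    Finset.sum_singleton]

include hF hZ in
lemma pr_snd : ∀ c : C, pr μ Y c = ∑ b ∈ F, pr μ (fun ω => (X ω, Y ω)) (b, c) := by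
  intro c
  show (μ _).toReal = _
  rw [snd_preimage X Y F hF c, pr_preimage_finset _ hZ, Finset.sum_product_right,
    Finset.sum_singleton]

include hF hG hZ in
lemma marg_sum_fst :
    ∑ bc ∈ F ×ˢ G, pr μ (fun ω => (X ω, Y ω)) bc * Real.logb 2 (pr μ X bc.1)
      = ∑ b ∈ F, pr μ X b * Real.logb 2 (pr μ X b) := by
  rw [Finset.sum_product]
  refine Finset.sum_congr rfl fun b _ => ?_
  dsimp only
  rw [← Finset.sum_mul, ← pr_fst X Y G hG hZ b]

include hF hG hZ in
lemma marg_sum_snd :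
    ∑ bc ∈ F ×ˢ G, pr μ (fun ω => (X ω, Y ω)) bc * Real.logb 2 (pr μ Y bc.2)
      = ∑ c ∈ G, pr μ Y c * Real.logb 2 (pr μ Y c) := by
  rw [Finset.sum_product_right]
  refine Finset.sum_congr rfl fun c _ => ?_
  dsimp only
  rw [← Finset.sum_mul, ← pr_snd X Y F hF hZ c]

include hF hG hZ in
lemma pr_pair_le_fst : ∀ bc : B × C,
    pr μ (fun ω => (X ω, Y ω)) bc ≤ pr μ X bc.1 := by
  intro bc
  refine pr_mono_of_subset _ X bc bc.1 ?_
  intro ω hω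
  simp only [Set.mem_preimage, Set.mem_singleton_iff] at hω ⊢
  rw [← hω]

include hF hG hZ in
lemma pr_pair_le_snd : ∀ bc : B × C,
    pr μ (fun ω => (X ω, Y ω)) bc ≤ pr μ Y bc.2 := by
  intro bc
  refine pr_mono_of_subset _ Y bc bc.2 ?_
  intro ω hω
  simp only [Set.mem_preimage, Set.mem_singleton_iff] at hω ⊢
  rw [← hω]

include hF hG hZ in
lemma shEntropy_pair_le_add :
    shEntropy μ (fun ω => (X ω, Y ω)) ≤ shEntropy μ X + shEntropy μ Y := by
  classical
  set Z := fun ω => (X ω, Y ω) with hZdef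
  have hFG : ∀ ω, Z ω ∈ F ×ˢ G := fun ω => Finset.mem_product.mpr ⟨hF ω, hG ω⟩
  set p := pr μ Z with hp
  have key := gibbs (F ×ˢ G) p (fun bc => pr μ X bc.1 * pr μ Y bc.2)
    (fun bc _ => pr_nonneg Z bc)
    (fun bc _ => mul_nonneg (pr_nonneg X _) (pr_nonneg Y _))
    (fun bc _ hne => by
      have h1 : 0 < p bc := lt_of_le_of_ne (pr_nonneg Z bc) (Ne.symm hne)
      exact mul_pos (lt_of_lt_of_le h1 (pr_pair_le_fst X Y F G hF hG hZ bc))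
        (lt_of_lt_of_le h1 (pr_pair_le_snd X Y F G hF hG hZ bc)))
    (sum_pr_eq_one Z (F ×ˢ G) hFG hZ)
    (by
      rw [Finset.sum_product]
      have : ∀ b ∈ F, ∑ c ∈ G, pr μ X b * pr μ Y c = pr μ X b * ∑ c ∈ G, pr μ Y c :=
        fun b _ => by rw [Finset.mul_sum]
      rw [Finset.sum_congr rfl this]
      have hYmeas : ∀ c, MeasurableSet (Y ⁻¹' {c}) := by
        intro c; rw [snd_preimage X Y F hF c]; exact meas_preimage_finset _ hZ _
      have hXmeas : ∀ b, MeasurableSet (X ⁻¹' {b}) := by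
        intro b; rw [fst_preimage X Y G hG b]; exact meas_preimage_finset _ hZ _
      rw [sum_pr_eq_one Y G hG hYmeas]
      simp only [mul_one]
      rw [sum_pr_eq_one X F hF hXmeas])
  rw [shEntropy_eq_sum Z (F ×ˢ G) hFG]
  refine le_trans key ?_
  rw [shEntropy_eq_sum X F hF, shEntropy_eq_sum Y G hG]
  have split : ∑ bc ∈ F ×ˢ G, p bc * Real.logb 2 (pr μ X bc.1 * pr μ Y bc.2)
      = ∑ bc ∈ F ×ˢ G, p bc * Real.logb 2 (pr μ X bc.1)
        + ∑ bc ∈ F ×ˢ G, p bc * Real.logb 2 (pr μ Y bc.2) := by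
    rw [← Finset.sum_add_distrib]
    refine Finset.sum_congr rfl fun bc _ => ?_
    rcases eq_or_ne (p bc) 0 with h0 | h0
    · simp [h0]
    · have h1 : 0 < p bc := lt_of_le_of_ne (pr_nonneg Z bc) (Ne.symm h0)
      have hx : pr μ X bc.1 ≠ 0 :=
        ne_of_gt (lt_of_lt_of_le h1 (pr_pair_le_fst X Y F G hF hG hZ bc))
      have hy : pr μ Y bc.2 ≠ 0 :=
        ne_of_gt (lt_of_lt_of_le h1 (pr_pair_le_snd X Y F G hF hG hZ bc))
      rw [Real.logb_mul hx hy, mul_add]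
  rw [split, marg_sum_fst X Y F G hF hG hZ, marg_sum_snd X Y F G hF hG hZ]
  linarith

include hF hG hZ in
lemma shEntropy_pair_le_card (hne : Nonempty Ω) :
    shEntropy μ (fun ω => (X ω, Y ω)) ≤ shEntropy μ X + Real.logb 2 (G.card : ℝ) := by
  classical
  set Z := fun ω => (X ω, Y ω) with hZdef
  have hFG : ∀ ω, Z ω ∈ F ×ˢ G := fun ω => Finset.mem_product.mpr ⟨hF ω, hG ω⟩
  have hGne : 0 < G.card := Finset.card_pos.mpr ⟨Y (Classical.choice hne), hG _⟩
  have hGcard : (0:ℝ) < (G.card : ℝ) := by exact_mod_cast hGne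
  set p := pr μ Z with hp
  have hXmeas : ∀ b, MeasurableSet (X ⁻¹' {b}) := by
    intro b; rw [fst_preimage X Y G hG b]; exact meas_preimage_finset _ hZ _
  have key := gibbs (F ×ˢ G) p (fun bc => pr μ X bc.1 / (G.card : ℝ))
    (fun bc _ => pr_nonneg Z bc)
    (fun bc _ => div_nonneg (pr_nonneg X _) (le_of_lt hGcard))
    (fun bc _ hne' => by
      have h1 : 0 < p bc := lt_of_le_of_ne (pr_nonneg Z bc) (Ne.symm hne')
      exact div_pos (lt_of_lt_of_le h1 (pr_pair_le_fst X Y F G hF hG hZ bc)) hGcard)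
    (sum_pr_eq_one Z (F ×ˢ G) hFG hZ)
    (by
      rw [Finset.sum_product]
      have : ∀ b ∈ F, ∑ _c ∈ G, pr μ X b / (G.card : ℝ) = pr μ X b := by
        intro b _
        rw [Finset.sum_const, nsmul_eq_mul]
        field_simp
      rw [Finset.sum_congr rfl this, sum_pr_eq_one X F hF hXmeas])
  rw [shEntropy_eq_sum Z (F ×ˢ G) hFG]
  refine le_trans key ?_
  rw [shEntropy_eq_sum X F hF]
  have split : ∑ bc ∈ F ×ˢ G, p bc * Real.logb 2 (pr μ X bc.1 / (G.card : ℝ))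
      = ∑ bc ∈ F ×ˢ G, p bc * Real.logb 2 (pr μ X bc.1)
        - ∑ bc ∈ F ×ˢ G, p bc * Real.logb 2 ((G.card : ℝ)) := by
    rw [← Finset.sum_sub_distrib]
    refine Finset.sum_congr rfl fun bc _ => ?_
    rcases eq_or_ne (p bc) 0 with h0 | h0
    · simp [h0]
    · have h1 : 0 < p bc := lt_of_le_of_ne (pr_nonneg Z bc) (Ne.symm h0)
      have hx : pr μ X bc.1 ≠ 0 :=
        ne_of_gt (lt_of_lt_of_le h1 (pr_pair_le_fst X Y F G hF hG hZ bc))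
      rw [Real.logb_div hx (ne_of_gt hGcard), mul_sub]
  rw [split, marg_sum_fst X Y F G hF hG hZ, ← Finset.sum_mul,
    sum_pr_eq_one Z (F ×ˢ G) hFG hZ, one_mul]
  linarith

end Pair

omit [IsProbabilityMeasure μ] in
lemma shEntropy_comp_measurePreserving {B : Type*} (X : Ω → B)
    (hX : ∀ b, MeasurableSet (X ⁻¹' {b})) {T : Ω → Ω}
    (hT : MeasurePreserving T μ μ) :
    shEntropy μ (fun ω => X (T ω)) = shEntropy μ X := by
  unfold shEntropy
  congr 1
  refine tsum_congr fun b => ?_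
  have h1 : (fun ω => X (T ω)) ⁻¹' {b} = T ⁻¹' (X ⁻¹' {b}) := rfl
  rw [h1, hT.measure_preimage (hX b).nullMeasurableSet]




variable {A : Type*} [LinearOrder A]

/-- rank of position `i` within the prefix ending at `i`. -/
def frank {L : ℕ} (v : Fin L → A) (i : Fin L) : ℕ :=
  (Finset.univ.filter (fun j => j ≤ i ∧ v j ≤ v i)).card

/-- the multiset of values of `v`. -/
def mset {L : ℕ} (v : Fin L → A) : Multiset A :=
  Multiset.map v Finset.univ.val

lemma mem_mset {L : ℕ} (v : Fin L → A) (i : Fin L) : v i ∈ mset v :=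
  Multiset.mem_map.mpr ⟨i, Finset.mem_val.mpr (Finset.mem_univ i), rfl⟩

lemma countP_le_countP (s : Multiset A) (p q : A → Prop) [DecidablePred p]
    [DecidablePred q] (h : ∀ a, p a → q a) : s.countP p ≤ s.countP q := by
  induction s using Multiset.induction_on with
  | empty => simp
  | cons a s ih =>
    rw [Multiset.countP_cons, Multiset.countP_cons]
    by_cases hp : p a
    · rw [if_pos hp, if_pos (h a hp)]; omega
    · rw [if_neg hp]
      split <;> omega

lemma countP_lt_of_mem {m : Multiset A} {x y : A} (hy : y ∈ m) (hxy : x < y) :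
    m.countP (· ≤ x) < m.countP (· ≤ y) := by
  classical
  obtain ⟨m', rfl⟩ := Multiset.exists_cons_of_mem hy
  rw [Multiset.countP_cons, Multiset.countP_cons]
  have h1 : ¬ (y ≤ x) := not_le.mpr hxy
  have h2 : m'.countP (· ≤ x) ≤ m'.countP (· ≤ y) :=
    countP_le_countP m' _ _ (fun z hz => le_trans hz hxy.le)
  simp [h1]
  omega

lemma eq_of_countP {m : Multiset A} {x y : A} (hx : x ∈ m) (hy : y ∈ m)
    (h : m.countP (· ≤ x) = m.countP (· ≤ y)) : x = y := by
  rcases lt_trichotomy x y with hlt | heq | hgt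
  · exact absurd h (ne_of_lt (countP_lt_of_mem hy hlt))
  · exact heq
  · exact absurd h.symm (ne_of_lt (countP_lt_of_mem hx hgt))

lemma frank_last {L : ℕ} (v : Fin (L+1) → A) :
    frank v (Fin.last L) = (mset v).countP (· ≤ v (Fin.last L)) := by
  classical
  unfold frank mset
  rw [Multiset.countP_map]
  have h1 : (Finset.univ.filter (fun j => j ≤ Fin.last L ∧ v j ≤ v (Fin.last L)))
      = Finset.univ.filter (fun j => v j ≤ v (Fin.last L)) := by
    refine Finset.filter_congr fun j _ => ?_
    simp [Fin.le_last j]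
  rw [h1]
  have h2 : (Finset.univ.filter (fun j => v j ≤ v (Fin.last L))).card
      = Multiset.countP (fun j => v j ≤ v (Fin.last L)) Finset.univ.val := by
    rw [Multiset.countP_eq_card_filter]
    rfl
  rw [h2]
  exact Multiset.countP_eq_card_filter (fun a => v a ≤ v (Fin.last L)) Finset.univ.val

lemma mset_succ {L : ℕ} (v : Fin (L+1) → A) :
    mset v = v (Fin.last L) ::ₘ mset (fun i : Fin L => v i.castSucc) := by
  classical
  unfold mset
  rw [Fin.univ_castSuccEmb]
  rw [Finset.cons_val, Multiset.map_cons, Finset.map_val, Multiset.map_map]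
  rfl

lemma frank_castSucc {L : ℕ} (v : Fin (L+1) → A) (i : Fin L) :
    frank (fun k : Fin L => v k.castSucc) i = frank v i.castSucc := by
  classical
  unfold frank
  refine Finset.card_bij (fun j _ => Fin.castSucc j) ?_ ?_ ?_
  · intro j hj
    simp only [Finset.mem_filter, Finset.mem_univ, true_and] at hj ⊢
    exact ⟨Fin.castSucc_le_castSucc_iff.mpr hj.1, hj.2⟩
  · intro j1 _ j2 _ h
    exact Fin.castSucc_injective L h
  · intro j' hj'
    simp only [Finset.mem_filter, Finset.mem_univ, true_and] at hj'
    have hlt : j'.1 < L := lt_of_le_of_lt hj'.1 i.isLt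
    refine ⟨⟨j'.1, hlt⟩, ?_, ?_⟩
    · simp only [Finset.mem_filter, Finset.mem_univ, true_and]
      constructor
      · exact_mod_cast hj'.1
      · have : Fin.castSucc (⟨j'.1, hlt⟩ : Fin L) = j' := by
          ext; simp
        rw [this]; exact hj'.2
    · ext; simp

lemma frank_cnt_inj : ∀ {L : ℕ} (v w : Fin L → A),
    (∀ i, frank v i = frank w i) → mset v = mset w → v = w := by
  intro L
  induction L with
  | zero => intro v w _ _; funext i; exact absurd i.isLt (by omega)
  | succ L ih =>
    intro v w hf hm
    have hvl : v (Fin.last L) = w (Fin.last L) := by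
      have h1 : (mset v).countP (· ≤ v (Fin.last L))
          = (mset w).countP (· ≤ w (Fin.last L)) := by
        rw [← frank_last, ← frank_last]; exact hf _
      rw [← hm] at h1
      exact eq_of_countP (mem_mset v _) (by rw [hm]; exact mem_mset w _) h1
    have hm' : mset (fun i : Fin L => v i.castSucc) = mset (fun i : Fin L => w i.castSucc) := by
      have h1 := mset_succ v
      have h2 := mset_succ w
      rw [h1, h2, hvl] at hm
      exact (Multiset.cons_inj_right _).mp hm
    have hf' : ∀ i, frank (fun k : Fin L => v k.castSucc) i
        = frank (fun k : Fin L => w k.castSucc) i := by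
      intro i
      rw [frank_castSucc v i, frank_castSucc w i]
      exact hf i.castSucc
    have := ih _ _ hf' hm'
    funext i
    refine Fin.lastCases ?_ ?_ i
    · exact hvl
    · intro j
      exact congrFun this j


end PermEnt

open Classical in
/-- Rank variable `R_n(ω) = #{i : 1 ≤ i ≤ n, S_i(ω) ≤ S_n(ω)}`. -/
noncomputable def rankVar {Ω A : Type*} [LinearOrder A] (S : ℕ → Ω → A) (n : ℕ) (ω : Ω) : ℕ :=
  ((Finset.Icc 1 n).filter (fun i => S i ω ≤ S n ω)).card

namespace PermEnt

lemma rankVar_eq_frank {Ω A : Type*} [LinearOrder A] (S : ℕ → Ω → A) (L : ℕ) (ω : Ω)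
    (i : Fin L) :
    rankVar S (i.1 + 1) ω = frank (fun k : Fin L => S (k.1 + 1) ω) i := by
  classical
  unfold rankVar frank
  refine (Finset.card_bij (fun (j : Fin L) _ => (j.1 + 1 : ℕ)) ?_ ?_ ?_).symm
  · intro j hj
    simp only [Finset.mem_filter, Finset.mem_univ, true_and] at hj
    simp only [Finset.mem_filter, Finset.mem_Icc]
    have hji : j.1 ≤ i.1 := hj.1
    exact ⟨⟨by omega, by omega⟩, hj.2⟩
  · intro j1 _ j2 _ hne
    ext
    omega
  · intro jn hjn
    simp only [Finset.mem_filter, Finset.mem_Icc] at hjn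
    obtain ⟨⟨h1, h2⟩, h3⟩ := hjn
    have hlt : jn - 1 < L := by have := i.isLt; omega
    refine ⟨⟨jn - 1, hlt⟩, ?_, ?_⟩
    · simp only [Finset.mem_filter, Finset.mem_univ, true_and]
      constructor
      · show (⟨jn - 1, hlt⟩ : Fin L) ≤ i
        have : jn - 1 ≤ i.1 := by omega
        exact this
      · have hjj : jn - 1 + 1 = jn := by omega
        simp only [hjj]
        exact h3
    · dsimp only
      omega

lemma frank_lt {A : Type*} [LinearOrder A] {L : ℕ} (v : Fin L → A) (i : Fin L) :
    frank v i < L + 2 := by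
  have h1 : frank v i ≤ (Finset.univ : Finset (Fin L)).card := Finset.card_filter_le _ _
  have h2 : (Finset.univ : Finset (Fin L)).card = L := by simp
  omega

lemma cnt_lt {A : Type*} [LinearOrder A] [Fintype A] {L : ℕ} (v : Fin L → A) (a : A) :
    Multiset.count a (mset v) < L + 1 := by
  classical
  have h1 : Multiset.count a (mset v) ≤ Multiset.card (mset v) := Multiset.count_le_card _ _
  have h2 : Multiset.card (mset v) = L := by
    unfold mset
    rw [Multiset.card_map]
    simp [Finset.card_univ]
  omega

lemma phi_injOn {A : Type*} [LinearOrder A] [Fintype A] {L : ℕ} :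
    Set.InjOn (fun v : Fin L → A => (frank v, fun a : A => Multiset.count a (mset v)))
      ↑(Finset.univ : Finset (Fin L → A)) := by
  classical
  intro v _ w _ h
  obtain ⟨h1, h2⟩ := Prod.ext_iff.mp h
  refine frank_cnt_inj v w (fun i => congrFun h1 i) ?_
  exact Multiset.ext.mpr (fun a => congrFun h2 a)

end PermEnt


namespace PermEnt

/-- The vector of the first `L` process values. -/
def svec {Ω A : Type*} (S : ℕ → Ω → A) (L : ℕ) (ω : Ω) (i : Fin L) : A := S (i.1 + 1) ω

end PermEnt

open PermEnt in
/-- For an ergodic stationary finite-alphabet process `S_n = g ∘ T^{n-1}`, the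
permutation entropy rate exists and equals the Shannon entropy rate:
`lim_L (1/(L−1)) H(R_1,…,R_L) = lim_L (1/L) H(S_1,…,S_L)`. -/
theorem permutation_entropy_rate_eq_entropy_rate {Ω A : Type*} [MeasurableSpace Ω]
    [Fintype A] [LinearOrder A] [MeasurableSpace A] [MeasurableSingletonClass A]
    (μ : Measure Ω) [IsProbabilityMeasure μ]
    (T : Ω → Ω) (hT : Ergodic T μ) (g : Ω → A) (hg : Measurable g)
    (S : ℕ → Ω → A) (hSdef : ∀ n ω, S n ω = g (T^[n - 1] ω)) :
    ∃ h : ℝ,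
      Filter.Tendsto
        (fun L : ℕ =>
          (1 / ((L : ℝ) - 1)) * shEntropy μ (fun ω => fun i : Fin L => rankVar S (i.1 + 1) ω))
        Filter.atTop (nhds h)
      ∧ Filter.Tendsto
          (fun L : ℕ =>
            (1 / (L : ℝ)) * shEntropy μ (fun ω => fun i : Fin L => S (i.1 + 1) ω))
          Filter.atTop (nhds h) := by
  classical
  have hTm : MeasurePreserving T μ μ := hT.toMeasurePreserving
  have hSm : ∀ n, Measurable (S n) := by
    intro n
    have hfn : S n = fun ω => g (T^[n - 1] ω) := funext fun ω => hSdef n ω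
    rw [hfn]
    exact hg.comp (hTm.measurable.iterate (n - 1))
  have hXmeas : ∀ (L : ℕ) (b : Fin L → A), MeasurableSet (svec S L ⁻¹' {b}) := by
    intro L b
    have hpre : svec S L ⁻¹' {b} = ⋂ i : Fin L, S (i.1 + 1) ⁻¹' {b i} := by
      ext ω
      simp only [Set.mem_preimage, Set.mem_singleton_iff, Set.mem_iInter, funext_iff]
      exact Iff.rfl
    rw [hpre]
    exact MeasurableSet.iInter fun i => hSm _ (measurableSet_singleton _)
  have hXF : ∀ (L : ℕ) (ω : Ω), svec S L ω ∈ (Finset.univ : Finset (Fin L → A)) :=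
    fun L ω => Finset.mem_univ _
  set u : ℕ → ℝ := fun L => shEntropy μ (svec S L) with hu
  have hnn : ∀ L, 0 ≤ u L := fun L => shEntropy_nonneg (svec S L) Finset.univ (hXF L)
  have hshift : ∀ (m n : ℕ), (fun ω (j : Fin n) => S (m + j.1 + 1) ω)
      = fun ω => svec S n (T^[m] ω) := by
    intro m n
    funext ω j
    show S (m + j.1 + 1) ω = S (j.1 + 1) (T^[m] ω)
    rw [hSdef, hSdef]
    have h1 : m + j.1 + 1 - 1 = j.1 + m := by omega
    have h2 : j.1 + 1 - 1 = j.1 := by omega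
    rw [h1, h2, Function.iterate_add_apply]
  have hYmeas : ∀ (m n : ℕ) (b : Fin n → A),
      MeasurableSet ((fun ω => svec S n (T^[m] ω)) ⁻¹' {b}) := fun m n b =>
    (hTm.measurable.iterate m) (hXmeas n b)
  have hsub : ∀ m n, u (m + n) ≤ u m + u n := by
    intro m n
    set f : (Fin (m + n) → A) → (Fin m → A) × (Fin n → A) :=
      fun v => (fun i => v (Fin.castAdd n i), fun j => v (Fin.natAdd m j)) with hf
    have hfinj : Set.InjOn f ↑(Finset.univ : Finset (Fin (m + n) → A)) := by
      intro v _ w _ hvw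
      obtain ⟨h1, h2⟩ := Prod.ext_iff.mp hvw
      funext k
      refine Fin.addCases (fun i => ?_) (fun j => ?_) k
      · exact congrFun h1 i
      · exact congrFun h2 j
    have heq : shEntropy μ (fun ω => f (svec S (m + n) ω)) = u (m + n) :=
      shEntropy_comp_injOn (svec S (m + n)) Finset.univ (hXF _) (hXmeas _) f hfinj
    have hcomp : (fun ω => f (svec S (m + n) ω))
        = fun ω => (svec S m ω, svec S n (T^[m] ω)) := by
      funext ω
      refine Prod.ext_iff.mpr ⟨?_, ?_⟩
      · funext i
        show S ((Fin.castAdd n i).1 + 1) ω = S (i.1 + 1) ω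
        norm_num
      · funext j
        show S ((Fin.natAdd m j).1 + 1) ω = svec S n (T^[m] ω) j
        have h3 : (Fin.natAdd m j).1 = m + j.1 := rfl
        rw [h3]
        exact congrFun (congrFun (hshift m n) ω) j
    have hZmeas : ∀ bc : (Fin m → A) × (Fin n → A),
        MeasurableSet ((fun ω => (svec S m ω, svec S n (T^[m] ω))) ⁻¹' {bc}) := by
      intro bc
      have hsplit : (fun ω => (svec S m ω, svec S n (T^[m] ω))) ⁻¹' {bc}
          = svec S m ⁻¹' {bc.1} ∩ (fun ω => svec S n (T^[m] ω)) ⁻¹' {bc.2} := by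
        ext ω; simp [Prod.ext_iff]
      rw [hsplit]
      exact (hXmeas m bc.1).inter (hYmeas m n bc.2)
    have hle := shEntropy_pair_le_add (μ := μ) (svec S m) (fun ω => svec S n (T^[m] ω))
      Finset.univ Finset.univ (fun ω => Finset.mem_univ _) (fun ω => Finset.mem_univ _)
      hZmeas
    have hstat : shEntropy μ (fun ω => svec S n (T^[m] ω)) = u n :=
      shEntropy_comp_measurePreserving (svec S n) (hXmeas n) (hTm.iterate m)
    rw [← heq, hcomp]
    rw [hstat] at hle
    exact hle
  have hSub : Subadditive u := hsub
  have hbdd : BddBelow (Set.range fun n : ℕ => u n / n) := by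
    refine ⟨0, ?_⟩
    rintro x ⟨n, rfl⟩
    exact div_nonneg (hnn n) (Nat.cast_nonneg n)
  have hlim := hSub.tendsto_lim hbdd
  -- rank-vector entropy
  set v : ℕ → ℝ := fun L => shEntropy μ (fun ω => frank (svec S L ω)) with hv
  have hvle : ∀ L, v L ≤ u L := fun L =>
    shEntropy_comp_le (μ := μ) (svec S L) Finset.univ (hXF L) (hXmeas L) frank
  have hΩ : Nonempty Ω := by
    by_contra hemp
    rw [not_nonempty_iff] at hemp
    have h0 : μ Set.univ = 1 := measure_univ
    rw [Set.univ_eq_empty_iff.mpr hemp] at h0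
    simp at h0
  have huvle : ∀ L : ℕ, u L ≤ v L + (Fintype.card A : ℝ) * Real.logb 2 ((L : ℝ) + 1) := by
    intro L
    set Φ : (Fin L → A) → (Fin L → ℕ) × (A → ℕ) :=
      fun w => (frank w, fun a => Multiset.count a (mset w)) with hΦ
    have h1 : shEntropy μ (fun ω => Φ (svec S L ω)) = u L :=
      shEntropy_comp_injOn (svec S L) Finset.univ (hXF L) (hXmeas L) Φ phi_injOn
    have hXr : ∀ r : Fin L → ℕ,
        MeasurableSet ((fun ω => frank (svec S L ω)) ⁻¹' {r}) :=
      fun r => comp_meas (svec S L) Finset.univ (hXF L) (hXmeas L) frank r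
    have hYc : ∀ c : A → ℕ,
        MeasurableSet ((fun ω => (fun a => Multiset.count a (mset (svec S L ω)))) ⁻¹' {c}) :=
      fun c => comp_meas (svec S L) Finset.univ (hXF L) (hXmeas L)
        (fun w a => Multiset.count a (mset w)) c
    have hZm : ∀ bc : (Fin L → ℕ) × (A → ℕ),
        MeasurableSet ((fun ω => (frank (svec S L ω),
          fun a => Multiset.count a (mset (svec S L ω)))) ⁻¹' {bc}) := by
      intro bc
      have hsplit : (fun ω => (frank (svec S L ω),
            fun a => Multiset.count a (mset (svec S L ω)))) ⁻¹' {bc}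
          = (fun ω => frank (svec S L ω)) ⁻¹' {bc.1}
            ∩ (fun ω => (fun a => Multiset.count a (mset (svec S L ω)))) ⁻¹' {bc.2} := by
        ext ω; simp [Prod.ext_iff]
      rw [hsplit]
      exact (hXr bc.1).inter (hYc bc.2)
    have hFr : ∀ ω, frank (svec S L ω)
        ∈ Fintype.piFinset (fun _ : Fin L => Finset.range (L + 2)) := by
      intro ω
      rw [Fintype.mem_piFinset]
      intro i
      rw [Finset.mem_range]
      exact frank_lt _ i
    have hGc : ∀ ω, (fun a => Multiset.count a (mset (svec S L ω)))
        ∈ Fintype.piFinset (fun _ : A => Finset.range (L + 1)) := by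
      intro ω
      rw [Fintype.mem_piFinset]
      intro a
      rw [Finset.mem_range]
      exact cnt_lt _ a
    have h2 := shEntropy_pair_le_card (μ := μ) (fun ω => frank (svec S L ω))
      (fun ω => (fun a => Multiset.count a (mset (svec S L ω))))
      (Fintype.piFinset (fun _ : Fin L => Finset.range (L + 2)))
      (Fintype.piFinset (fun _ : A => Finset.range (L + 1)))
      hFr hGc hZm hΩ
    have hcard : ((Fintype.piFinset (fun _ : A => Finset.range (L + 1))).card : ℝ)
        = ((L : ℝ) + 1) ^ Fintype.card A := by
      rw [Fintype.card_piFinset]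
      push_cast
      simp [Finset.card_range]
    rw [hcard] at h2
    have h3 : Real.logb 2 (((L : ℝ) + 1) ^ Fintype.card A)
        = (Fintype.card A : ℝ) * Real.logb 2 ((L : ℝ) + 1) := Real.logb_pow 2 _ _
    rw [h3] at h2
    have h4 : (fun ω => Φ (svec S L ω))
        = fun ω => (frank (svec S L ω), fun a => Multiset.count a (mset (svec S L ω))) := rfl
    rw [← h1, h4]
    exact h2
  -- auxiliary limits
  have hsub1 : Filter.Tendsto (fun L : ℕ => ((L : ℝ) - 1)) Filter.atTop Filter.atTop := by
    have hb := tendsto_natCast_atTop_atTop (R := ℝ)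
    have := tendsto_atTop_add_const_right Filter.atTop (-1 : ℝ) hb
    refine this.congr fun L => ?_
    ring
  have hl1 : Filter.Tendsto (fun L : ℕ => u L / ((L : ℝ) - 1)) Filter.atTop (nhds hSub.lim) := by
    have hinv : Filter.Tendsto (fun L : ℕ => ((L : ℝ) - 1)⁻¹) Filter.atTop (nhds 0) :=
      hsub1.inv_tendsto_atTop
    have hq : Filter.Tendsto (fun L : ℕ => (L : ℝ) / ((L : ℝ) - 1)) Filter.atTop (nhds 1) := by
      have hplus : Filter.Tendsto (fun L : ℕ => 1 + ((L : ℝ) - 1)⁻¹) Filter.atTop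
          (nhds (1 + 0)) := tendsto_const_nhds.add hinv
      rw [add_zero] at hplus
      refine hplus.congr' ?_
      filter_upwards [Filter.eventually_ge_atTop 2] with L hL
      have hL2 : (2 : ℝ) ≤ (L : ℝ) := by exact_mod_cast hL
      have hne : ((L : ℝ) - 1) ≠ 0 := by linarith
      field_simp
      ring
    have hmul := hlim.mul hq
    rw [mul_one] at hmul
    refine hmul.congr' ?_
    filter_upwards [Filter.eventually_ge_atTop 2] with L hL
    have hL1 : (2 : ℝ) ≤ (L : ℝ) := by exact_mod_cast hL
    have hne : (L : ℝ) ≠ 0 := by linarith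
    have hne2 : ((L : ℝ) - 1) ≠ 0 := by linarith
    field_simp
  have hlog : Filter.Tendsto (fun L : ℕ => Real.log ((L : ℝ) + 1) / ((L : ℝ) - 1))
      Filter.atTop (nhds 0) := by
    have hbase := Real.tendsto_pow_log_div_mul_add_atTop 1 (-2) 1 one_ne_zero
    have hcomp : Filter.Tendsto (fun L : ℕ => ((L : ℝ) + 1)) Filter.atTop Filter.atTop :=
      tendsto_atTop_add_const_right Filter.atTop 1 (tendsto_natCast_atTop_atTop (R := ℝ))
    have hc := hbase.comp hcomp
    refine hc.congr fun L => ?_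
    simp only [Function.comp_apply, pow_one]
    congr 1
    ring
  have hl0 : Filter.Tendsto
      (fun L : ℕ => (Fintype.card A : ℝ) * Real.logb 2 ((L : ℝ) + 1) / ((L : ℝ) - 1))
      Filter.atTop (nhds 0) := by
    have hmul := hlog.const_mul ((Fintype.card A : ℝ) / Real.log 2)
    rw [mul_zero] at hmul
    refine hmul.congr fun L => ?_
    rw [Real.logb]
    ring
  refine ⟨hSub.lim, ?_, ?_⟩
  · -- permutation entropy side
    have hgoal_eq : ∀ L : ℕ,
        shEntropy μ (fun ω => fun i : Fin L => rankVar S (i.1 + 1) ω) = v L := by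
      intro L
      rw [hv]
      congr 1
      funext ω
      funext i
      exact rankVar_eq_frank S L ω i
    have hlower : Filter.Tendsto
        (fun L : ℕ => u L / ((L : ℝ) - 1)
          - (Fintype.card A : ℝ) * Real.logb 2 ((L : ℝ) + 1) / ((L : ℝ) - 1))
        Filter.atTop (nhds hSub.lim) := by
      have := hl1.sub hl0
      rwa [sub_zero] at this
    refine tendsto_of_tendsto_of_tendsto_of_le_of_le' hlower hl1 ?_ ?_
    · filter_upwards [Filter.eventually_ge_atTop 2] with L hL
      rw [hgoal_eq L]
      have hL2 : (2 : ℝ) ≤ (L : ℝ) := by exact_mod_cast hL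
      have hpos : (0 : ℝ) < (L : ℝ) - 1 := by linarith
      rw [one_div, inv_mul_eq_div, ← sub_div]
      have hnum : u L - (Fintype.card A : ℝ) * Real.logb 2 ((L : ℝ) + 1) ≤ v L := by
        linarith [huvle L]
      gcongr
    · filter_upwards [Filter.eventually_ge_atTop 2] with L hL
      rw [hgoal_eq L]
      have hL2 : (2 : ℝ) ≤ (L : ℝ) := by exact_mod_cast hL
      have hpos : (0 : ℝ) < (L : ℝ) - 1 := by linarith
      rw [one_div, inv_mul_eq_div]
      gcongr
      exact hvle L
  · -- Shannon entropy side
    refine Filter.Tendsto.congr (fun L => ?_) hlim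
    rw [one_div, inv_mul_eq_div]
    rfl
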